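/- The set G of quadratic binomials y_α y_β − y_{γ_odd} y_{γ_even}, taken over all nonsorted pairs {α, β} of admissible tuples, is a minimal generating set of ker π: for every g ∈ G, g does not belong to the ideal of K[y_α : α ∈ V] generated by G \ {g}. -/

import Mathlib

open MvPolynomial Finset

variable (τ d M : ℕ) (b c s r : Fin M → ℕ)

/-- A tuple α = (α_1,…,α_τ) with entries in {1,…,d} is admissible if it is
weakly increasing and for every i ∈ {1,…,M}, c_i ≤ #{k : s_i ≤ α_k ≤ r_i} ≤ b_i. -/
structure Admissible (α : Fin τ → ℕ) : Prop where
  mono : Monotone α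
  mem : ∀ k, 1 ≤ α k ∧ α k ≤ d
  count : ∀ i : Fin M,
    c i ≤ (Finset.univ.filter fun k : Fin τ => s i ≤ α k ∧ α k ≤ r i).card ∧
    (Finset.univ.filter fun k : Fin τ => s i ≤ α k ∧ α k ≤ r i).card ≤ b i

/-- `IsSplit α β γodd γeven` : γodd and γeven are the odd- and even-position
subsequences of the weakly increasing rearrangement γ of the 2τ entries of α and β. -/
def IsSplit {τ : ℕ} (α β γodd γeven : Fin τ → ℕ) : Prop :=
  ∃ γ : Fin (2 * τ) → ℕ, Monotone γ ∧
    ((List.ofFn γ : List ℕ) : Multiset ℕ)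
      = ((List.ofFn α ++ List.ofFn β : List ℕ) : Multiset ℕ) ∧
    ∀ t : Fin τ, γodd t = γ ⟨2 * t.1, by have := t.isLt; omega⟩ ∧
      γeven t = γ ⟨2 * t.1 + 1, by have := t.isLt; omega⟩

/-- The pair (α, β), in this order, is sorted: α_1 ≤ β_1 ≤ α_2 ≤ β_2 ≤ ⋯ ≤ α_τ ≤ β_τ. -/
def PairOrdered {τ : ℕ} (α β : Fin τ → ℕ) : Prop :=
  (∀ t, α t ≤ β t) ∧ ∀ t t' : Fin τ, t.1 + 1 = t'.1 → β t ≤ α t'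

/-- The pair {α, β} is nonsorted: neither (α, β) nor (β, α) is sorted. -/
def Nonsorted {τ : ℕ} (α β : Fin τ → ℕ) : Prop :=
  ¬ (PairOrdered α β ∨ PairOrdered β α)

/-- The toric (Segre–Veronese) homomorphism π with π(y_α) = q_{α_1} ⋯ q_{α_τ},
where q_1, …, q_d are the variables of `MvPolynomial (Fin d) K` (the 1-based
entry j of α corresponds to the variable indexed by j − 1 : Fin d). -/
noncomputable def piSV (K : Type*) [Field K] :
    MvPolynomial {x : Fin τ → ℕ // Admissible τ d M b c s r x} K →ₐ[K]
      MvPolynomial (Fin d) K :=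
  aeval fun v => ∏ k : Fin τ, X (⟨v.1 k - 1, by have := v.2.mem k; omega⟩ : Fin d)

/-- The quadratic move e_{γodd} + e_{γeven} − e_α − e_β. -/
def QuadMove {V : Type*} [DecidableEq V] (α β γodd γeven : V) : V → ℤ := fun v =>
  (if v = γodd then 1 else 0) + (if v = γeven then 1 else 0)
    - (if v = α then 1 else 0) - (if v = β then 1 else 0)

namespace SVaux



lemma card_filter_lt (N m : ℕ) :
    ((Finset.univ : Finset (Fin N)).filter fun j => j.1 < m).card = min m N := by
  have h : ∀ x ∈ Finset.range (min m N), x < N := by intro x hx; simp at hx; omega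
  have he : ((Finset.univ : Finset (Fin N)).filter fun j => j.1 < m)
      = (Finset.range (min m N)).attachFin h := by
    ext i
    simp only [Finset.mem_filter, Finset.mem_univ, true_and, Finset.mem_attachFin,
      Finset.mem_range]
    have := i.isLt
    omega
  rw [he, Finset.card_attachFin, Finset.card_range]

def cnt {τ : ℕ} (α : Fin τ → ℕ) (v : ℕ) : ℕ :=
  ((Finset.univ : Finset (Fin τ)).filter fun k => α k ≤ v).card

lemma cnt_le_card {τ : ℕ} (α : Fin τ → ℕ) (v : ℕ) : cnt α v ≤ τ := by
  classical
  simpa [cnt] using (Finset.card_filter_le (Finset.univ : Finset (Fin τ)) fun k => α k ≤ v)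

lemma le_iff_lt_cnt {τ : ℕ} {α : Fin τ → ℕ} (hm : Monotone α) (v : ℕ) (i : Fin τ) :
    α i ≤ v ↔ i.1 < cnt α v := by
  constructor
  · intro h
    have hsub : ((Finset.univ : Finset (Fin τ)).filter fun j => j.1 < i.1 + 1)
        ⊆ ((Finset.univ : Finset (Fin τ)).filter fun k => α k ≤ v) := by
      intro j hj
      simp only [Finset.mem_filter, Finset.mem_univ, true_and] at hj ⊢
      exact le_trans (hm (by omega : j ≤ i)) h
    have h1 := Finset.card_le_card hsub
    rw [card_filter_lt] at h1
    have h2 : min (i.1 + 1) τ = i.1 + 1 := by have := i.isLt; omega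
    unfold cnt
    omega
  · intro h
    by_contra hc
    push_neg at hc
    have hsub : ((Finset.univ : Finset (Fin τ)).filter fun k => α k ≤ v)
        ⊆ ((Finset.univ : Finset (Fin τ)).filter fun j => j.1 < i.1) := by
      intro j hj
      simp only [Finset.mem_filter, Finset.mem_univ, true_and] at hj ⊢
      by_contra hji
      push_neg at hji
      exact absurd (le_trans (hm (by exact hji : i ≤ j)) hj) (by omega)
    have h1 := Finset.card_le_card hsub
    rw [card_filter_lt] at h1
    unfold cnt at h
    omega

lemma cnt_inj {τ : ℕ} {α β : Fin τ → ℕ} (hα : Monotone α) (hβ : Monotone β)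
    (h : ∀ v, cnt α v = cnt β v) : α = β := by
  funext k
  have h1 : α k ≤ β k := by
    rw [le_iff_lt_cnt hα, h]
    rw [← le_iff_lt_cnt hβ]
  have h2 : β k ≤ α k := by
    rw [le_iff_lt_cnt hβ, ← h]
    rw [← le_iff_lt_cnt hα]
  omega

lemma ofFn_multiset {β : Type*} {n : ℕ} (f : Fin n → β) :
    ((List.ofFn f : List β) : Multiset β) = ∑ i : Fin n, {f i} := by
  induction n with
  | zero => simp
  | succ n ih =>
    rw [List.ofFn_succ, Fin.sum_univ_succ]
    simp only [← Multiset.cons_coe, ih]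
    rfl

lemma countP_ofFn {n : ℕ} (f : Fin n → ℕ) (p : ℕ → Prop) [DecidablePred p] :
    Multiset.countP p ((List.ofFn f : List ℕ) : Multiset ℕ)
      = ((Finset.univ : Finset (Fin n)).filter fun i => p (f i)).card := by
  rw [ofFn_multiset, Finset.card_filter]
  induction (Finset.univ : Finset (Fin n)) using Finset.induction with
  | empty => simp
  | insert a s h ih =>
    rw [Finset.sum_insert h, Finset.sum_insert h, Multiset.countP_add, ih]
    have : ∀ x : ℕ, Multiset.countP p ({x} : Multiset ℕ) = if p x then 1 else 0 := by
      intro x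
      rw [show ({x} : Multiset ℕ) = x ::ₘ 0 from rfl, Multiset.countP_cons]
      simp
    rw [this]

lemma sum_evenodd {β : Type*} [AddCommMonoid β] {τ : ℕ} (g : Fin (2*τ) → β) :
    ∑ i : Fin (2*τ), g i
      = (∑ t : Fin τ, g ⟨2*t.1, by have := t.isLt; omega⟩)
        + ∑ t : Fin τ, g ⟨2*t.1+1, by have := t.isLt; omega⟩ := by
  let E : Fin τ ⊕ Fin τ ≃ Fin (2*τ) :=
    { toFun := Sum.elim (fun t => ⟨2*t.1, by have := t.isLt; omega⟩)
        (fun t => ⟨2*t.1+1, by have := t.isLt; omega⟩)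
      invFun := fun i => if h : i.1 % 2 = 0 then Sum.inl ⟨i.1/2, by have := i.isLt; omega⟩
        else Sum.inr ⟨i.1/2, by have := i.isLt; omega⟩
      left_inv := by
        rintro (t | t) <;> dsimp only [Sum.elim_inl, Sum.elim_inr]
        · rw [dif_pos (by omega)]
          exact congrArg Sum.inl (Fin.ext (show 2*t.1/2 = t.1 by omega))
        · rw [dif_neg (by omega)]
          exact congrArg Sum.inr (Fin.ext (show (2*t.1+1)/2 = t.1 by omega))
      right_inv := by
        intro i
        dsimp only
        split_ifs with h <;> dsimp only [Sum.elim_inl, Sum.elim_inr]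
        · exact Fin.ext (show 2*(i.1/2) = i.1 by omega)
        · exact Fin.ext (show 2*(i.1/2)+1 = i.1 by omega) }
  rw [← Equiv.sum_comp E g, Fintype.sum_sum_type]
  rfl


section Split

lemma mono_ofFn_inj {N : ℕ} {f g : Fin N → ℕ} (hf : Monotone f) (hg : Monotone g)
    (h : ((List.ofFn f : List ℕ) : Multiset ℕ) = ((List.ofFn g : List ℕ) : Multiset ℕ)) :
    f = g := by
  have hp : List.Perm (List.ofFn f) (List.ofFn g) := Multiset.coe_eq_coe.mp h
  have hsf : (List.ofFn f).Pairwise (· ≤ ·) :=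
    List.pairwise_ofFn.mpr (fun i j hij => hf hij.le)
  have hsg : (List.ofFn g).Pairwise (· ≤ ·) :=
    List.pairwise_ofFn.mpr (fun i j hij => hg hij.le)
  exact List.ofFn_injective (List.Perm.eq_of_pairwise' hsf hsg hp)

lemma isSplit_entries {τ : ℕ} {α β o e : Fin τ → ℕ} (h : IsSplit α β o e) :
    ((List.ofFn o : List ℕ) : Multiset ℕ) + ((List.ofFn e : List ℕ) : Multiset ℕ)
      = ((List.ofFn α : List ℕ) : Multiset ℕ) + ((List.ofFn β : List ℕ) : Multiset ℕ) := by
  obtain ⟨γ, hm, hms, hoe⟩ := h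
  have h1 : ((List.ofFn γ : List ℕ) : Multiset ℕ)
      = ((List.ofFn o : List ℕ) : Multiset ℕ) + ((List.ofFn e : List ℕ) : Multiset ℕ) := by
    rw [ofFn_multiset γ, sum_evenodd (fun i => ({γ i} : Multiset ℕ)),
      ofFn_multiset o, ofFn_multiset e]
    congr 1
    · exact Finset.sum_congr rfl fun t _ => by rw [(hoe t).1]
    · exact Finset.sum_congr rfl fun t _ => by rw [(hoe t).2]
  rw [← h1, hms, ← Multiset.coe_add]

lemma isSplit_pairOrdered {τ : ℕ} {α β o e : Fin τ → ℕ} (h : IsSplit α β o e) :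
    PairOrdered o e := by
  obtain ⟨γ, hm, _, hoe⟩ := h
  constructor
  · intro t
    rw [(hoe t).1, (hoe t).2]
    exact hm (by simp [Fin.mk_le_mk])
  · intro t t' ht
    rw [(hoe t).2, (hoe t').1]
    exact hm (by simp [Fin.mk_le_mk]; omega)

lemma isSplit_unique {τ : ℕ} {α β α' β' o e o' e' : Fin τ → ℕ}
    (h1 : IsSplit α β o e) (h2 : IsSplit α' β' o' e')
    (hab : ((List.ofFn α : List ℕ) : Multiset ℕ) + ((List.ofFn β : List ℕ) : Multiset ℕ)
      = ((List.ofFn α' : List ℕ) : Multiset ℕ) + ((List.ofFn β' : List ℕ) : Multiset ℕ)) :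
    o = o' ∧ e = e' := by
  obtain ⟨γ, hm, hms, hoe⟩ := h1
  obtain ⟨γ', hm', hms', hoe'⟩ := h2
  have hγ : γ = γ' := by
    apply mono_ofFn_inj hm hm'
    rw [hms, hms', ← Multiset.coe_add, ← Multiset.coe_add, hab]
  subst hγ
  constructor
  · funext t; rw [(hoe t).1, (hoe' t).1]
  · funext t; rw [(hoe t).2, (hoe' t).2]

lemma interval_card {τ : ℕ} {x : Fin τ → ℕ} (hx1 : ∀ k, 1 ≤ x k) {si ri : ℕ}
    (hs : 1 ≤ si) (hsri : si ≤ ri + 1) :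
    ((Finset.univ : Finset (Fin τ)).filter fun k => si ≤ x k ∧ x k ≤ ri).card
      + cnt x (si - 1) = cnt x ri := by
  classical
  unfold cnt
  rw [← Finset.card_union_of_disjoint]
  · congr 1
    ext k
    simp only [Finset.mem_union, Finset.mem_filter, Finset.mem_univ, true_and]
    have := hx1 k
    omega
  · rw [Finset.disjoint_filter]
    intro k _ hk
    simp only [not_le]
    omega


lemma cnt_eq_of_iff {τ : ℕ} (x : Fin τ → ℕ) (v m : ℕ) (hm : m ≤ τ)
    (h : ∀ t : Fin τ, x t ≤ v ↔ t.1 < m) : cnt x v = m := by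
  unfold cnt
  rw [Finset.filter_congr (q := fun t : Fin τ => t.1 < m) (fun t _ => h t), card_filter_lt]
  omega


lemma admissible_of_cnt {τ d M : ℕ} {b c s r : Fin M → ℕ}
    (hs : ∀ i, 1 ≤ s i) (hsr : ∀ i, s i ≤ r i)
    {α β x : Fin τ → ℕ}
    (hA : Admissible τ d M b c s r α) (hB : Admissible τ d M b c s r β)
    (hxm : Monotone x) (hmem : ∀ k, 1 ≤ x k ∧ x k ≤ d)
    (hcnt : (∀ v, cnt x v = (cnt α v + cnt β v + 1)/2)
      ∨ (∀ v, cnt x v = (cnt α v + cnt β v)/2)) :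
    Admissible τ d M b c s r x := by
  refine ⟨hxm, hmem, fun i => ?_⟩
  have hsri : s i ≤ r i + 1 := by have := hsr i; omega
  have eα := interval_card (fun k => (hA.mem k).1) (hs i) hsri
  have eβ := interval_card (fun k => (hB.mem k).1) (hs i) hsri
  have ex := interval_card (fun k => (hmem k).1) (hs i) hsri
  have hcα := hA.count i
  have hcβ := hB.count i
  rcases hcnt with h | h
  · have h1 := h (r i)
    have h2 := h (s i - 1)
    omega
  · have h1 := h (r i)
    have h2 := h (s i - 1)
    omega

lemma split_exists {τ d M : ℕ} {b c s r : Fin M → ℕ}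
    (hs : ∀ i, 1 ≤ s i) (hsr : ∀ i, s i ≤ r i)
    {α β : Fin τ → ℕ} (hA : Admissible τ d M b c s r α) (hB : Admissible τ d M b c s r β) :
    ∃ o e : Fin τ → ℕ, Admissible τ d M b c s r o ∧ Admissible τ d M b c s r e ∧
      IsSplit α β o e ∧
      (∀ v, cnt o v = (cnt α v + cnt β v + 1)/2 ∧ cnt e v = (cnt α v + cnt β v)/2) := by
  classical
  set L : List ℕ := Multiset.sort
    (((List.ofFn α ++ List.ofFn β : List ℕ)) : Multiset ℕ) (· ≤ ·) with hL
  have hlen : L.length = 2*τ := by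
    rw [hL, Multiset.length_sort, Multiset.coe_card, List.length_append]
    simp only [List.length_ofFn]
    omega
  set γ : Fin (2*τ) → ℕ := fun i => L.get ⟨i.1, by rw [hlen]; exact i.isLt⟩ with hγ
  have hγm : Monotone γ := by
    intro i j hij
    exact (Multiset.pairwise_sort _ (· ≤ ·)).rel_get_of_le (Fin.mk_le_mk.mpr hij)
  have hof : List.ofFn γ = L := by
    apply List.ext_get (by simp [hlen])
    intro n h1 h2
    rw [List.get_ofFn]
    rfl
  have hms : ((List.ofFn γ : List ℕ) : Multiset ℕ)
      = ((List.ofFn α ++ List.ofFn β : List ℕ) : Multiset ℕ) := by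
    rw [hof, hL, Multiset.sort_eq]
  have hTcard : ∀ v, cnt γ v = cnt α v + cnt β v := by
    intro v
    have h1 : Multiset.countP (· ≤ v) ((List.ofFn γ : List ℕ) : Multiset ℕ) = cnt γ v :=
      countP_ofFn γ (· ≤ v)
    rw [hms, ← Multiset.coe_add, Multiset.countP_add, countP_ofFn α (· ≤ v),
      countP_ofFn β (· ≤ v)] at h1
    exact h1.symm
  have hkey : ∀ (v j : ℕ) (hj : j < 2*τ), (γ ⟨j, hj⟩ ≤ v ↔ j < cnt α v + cnt β v) := by
    intro v j hj
    rw [le_iff_lt_cnt hγm, hTcard]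
  have hmemγ : ∀ i : Fin (2*τ), 1 ≤ γ i ∧ γ i ≤ d := by
    intro i
    have h1 : γ i ∈ List.ofFn γ := (List.mem_ofFn (f := γ) (a := γ i)).mpr ⟨i, rfl⟩
    have h2 : γ i ∈ ((List.ofFn γ : List ℕ) : Multiset ℕ) := Multiset.mem_coe.mpr h1
    rw [hms] at h2
    have h3 := Multiset.mem_coe.mp h2
    rcases List.mem_append.mp h3 with h4 | h4
    · obtain ⟨k, hk⟩ := (List.mem_ofFn (f := α)).mp h4
      rw [← hk]
      exact hA.mem k
    · obtain ⟨k, hk⟩ := (List.mem_ofFn (f := β)).mp h4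
      rw [← hk]
      exact hB.mem k
  have hco : ∀ v, cnt (fun t : Fin τ => γ ⟨2*t.1, by have := t.isLt; omega⟩) v
      = (cnt α v + cnt β v + 1)/2 := by
    intro v
    have hc1 := cnt_le_card α v
    have hc2 := cnt_le_card β v
    refine cnt_eq_of_iff _ _ _ (by omega) (fun t => ?_)
    refine (hkey v (2*t.1) (by have := t.isLt; omega)).trans ?_
    constructor <;> (intro; omega)
  have hce : ∀ v, cnt (fun t : Fin τ => γ ⟨2*t.1+1, by have := t.isLt; omega⟩) v
      = (cnt α v + cnt β v)/2 := by
    intro v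
    have hc1 := cnt_le_card α v
    have hc2 := cnt_le_card β v
    refine cnt_eq_of_iff _ _ _ (by omega) (fun t => ?_)
    refine (hkey v (2*t.1+1) (by have := t.isLt; omega)).trans ?_
    constructor <;> (intro; omega)
  refine ⟨fun t => γ ⟨2*t.1, by have := t.isLt; omega⟩,
    fun t => γ ⟨2*t.1+1, by have := t.isLt; omega⟩, ?_, ?_,
    ⟨γ, hγm, hms, fun t => ⟨rfl, rfl⟩⟩, fun v => ⟨hco v, hce v⟩⟩
  · refine admissible_of_cnt hs hsr hA hB ?_ (fun k => hmemγ _) (Or.inl hco)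
    intro t t' htt
    have h' : t.1 ≤ t'.1 := htt
    exact hγm (Fin.mk_le_mk.mpr (by omega))
  · refine admissible_of_cnt hs hsr hA hB ?_ (fun k => hmemγ _) (Or.inr hce)
    intro t t' htt
    have h' : t.1 ≤ t'.1 := htt
    exact hγm (Fin.mk_le_mk.mpr (by omega))

end Split

section Chains

variable {τ d M : ℕ} {b c s r : Fin M → ℕ}

local notation "V" => {x : Fin τ → ℕ // Admissible τ d M b c s r x}

def PO (a a' : V) : Prop := PairOrdered a.1 a'.1

def Comp (a a' : V) : Prop := PO a a' ∨ PO a' a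

lemma po_trans' {a a' x : V} (hab : PO a a') (hbx : PO a' x) (hc : Comp a x) : PO a x := by
  rcases hc with h | h
  · exact h
  · have hax : ∀ t, a.1 t = x.1 t :=
      fun t => le_antisymm (le_trans (hab.1 t) (hbx.1 t)) (h.1 t)
    constructor
    · intro t; exact (hax t).le
    · intro t t' ht
      rw [← hax t]
      exact a.2.mono (show t ≤ t' from by rw [Fin.le_def]; omega)

lemma insert_chain (l : List V) (x : V) (hpw : l.Pairwise PO)
    (hcomp : ∀ y ∈ l, Comp x y) :
    ∃ l', List.Perm (x :: l) l' ∧ l'.Pairwise PO := by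
  induction l with
  | nil => exact ⟨[x], List.Perm.refl _, List.pairwise_singleton _ _⟩
  | cons y ys ih =>
    rw [List.pairwise_cons] at hpw
    obtain ⟨hy, hys⟩ := hpw
    have hx : Comp x y := hcomp y (by simp)
    by_cases hxy : PO x y
    · refine ⟨x :: y :: ys, List.Perm.refl _, ?_⟩
      rw [List.pairwise_cons]
      refine ⟨?_, by rw [List.pairwise_cons]; exact ⟨hy, hys⟩⟩
      intro z hz
      rcases List.mem_cons.mp hz with h | h
      · subst h; exact hxy
      · exact po_trans' hxy (hy z h) (hcomp z (by simp [h]))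
    · have hyx : PO y x := hx.resolve_left hxy
      obtain ⟨l'', hperm, hpw''⟩ := ih hys (fun z hz => hcomp z (by simp [hz]))
      refine ⟨y :: l'', ?_, ?_⟩
      · exact (List.Perm.swap y x ys).trans (hperm.cons y)
      · rw [List.pairwise_cons]
        refine ⟨?_, hpw''⟩
        intro z hz
        rcases List.mem_cons.mp (hperm.symm.subset hz) with h | h
        · subst h; exact hyx
        · exact hy z h

lemma chain_of_pairwise (l : List V) (h : l.Pairwise Comp) :
    ∃ l', List.Perm l l' ∧ l'.Pairwise PO := by
  induction l with
  | nil => exact ⟨[], List.Perm.refl _, List.Pairwise.nil⟩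
  | cons x xs ih =>
    rw [List.pairwise_cons] at h
    obtain ⟨hx, hxs⟩ := h
    obtain ⟨l'', hp, hpw⟩ := ih hxs
    obtain ⟨l3, hp3, hpw3⟩ := insert_chain l'' x hpw (fun y hy => hx y (hp.symm.subset hy))
    exact ⟨l3, (hp.cons x).trans hp3, hpw3⟩

def entriesM (S : Multiset V) : Multiset ℕ :=
  (S.map fun v => ((List.ofFn v.1 : List ℕ) : Multiset ℕ)).sum

lemma entriesM_card (S : Multiset V) : (entriesM S).card = τ * S.card := by
  induction S using Multiset.induction with
  | empty => simp [entriesM]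
  | cons a S ih =>
    rw [entriesM, Multiset.map_cons, Multiset.sum_cons, Multiset.card_add, Multiset.coe_card,
      List.length_ofFn]
    rw [entriesM] at ih
    rw [ih, Multiset.card_cons]
    ring

lemma entriesM_cons (a : V) (S : Multiset V) :
    entriesM (a ::ₘ S) = ((List.ofFn a.1 : List ℕ) : Multiset ℕ) + entriesM S := by
  rw [entriesM, Multiset.map_cons, Multiset.sum_cons, entriesM]

def colE (τ n : ℕ) (hn : 0 < n) : Fin τ × Fin n ≃ Fin (τ * n) where
  toFun x := ⟨x.2.1 + x.1.1 * n, by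
    have h1 : x.2.1 + x.1.1 * n < (x.1.1 + 1) * n := by
      rw [add_mul, one_mul]
      have := x.2.isLt
      omega
    exact lt_of_lt_of_le h1 (Nat.mul_le_mul_right n x.1.isLt)⟩
  invFun i := (⟨i.1 / n, by
      rw [Nat.div_lt_iff_lt_mul hn]
      exact i.isLt⟩,
    ⟨i.1 % n, Nat.mod_lt _ hn⟩)
  left_inv := by
    rintro ⟨k, j⟩
    have h1 : (j.1 + k.1 * n) / n = k.1 := by
      rw [Nat.add_mul_div_right _ _ hn, Nat.div_eq_of_lt j.isLt, Nat.zero_add]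
    have h2 : (j.1 + k.1 * n) % n = j.1 := by
      rw [Nat.add_mul_mod_self_right, Nat.mod_eq_of_lt j.isLt]
    exact Prod.ext (Fin.ext h1) (Fin.ext h2)
  right_inv := by
    intro i
    exact Fin.ext (Nat.mod_add_div' i.1 n)

lemma reading_eq (l : List V) (hn : 0 < l.length) (hpw : l.Pairwise PO) :
    ∃ g : Fin (τ * l.length) → ℕ, Monotone g ∧
      ((List.ofFn g : List ℕ) : Multiset ℕ) = entriesM (l : Multiset V) ∧
      ∀ (k : Fin τ) (j : Fin l.length), (l.get j).1 k = g ((colE τ l.length hn) (k, j)) := by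
  classical
  set n := l.length with hnl
  set g : Fin (τ * n) → ℕ := fun i =>
    (l.get ⟨i.1 % n, Nat.mod_lt _ hn⟩).1 ⟨i.1 / n, by
      rw [Nat.div_lt_iff_lt_mul hn]; exact i.isLt⟩ with hg
  have hget : ∀ (a a' : Fin n) (u w : Fin τ), a = a' → u = w →
      (l.get a).1 u = (l.get a').1 w := by
    rintro a a' u w rfl rfl; rfl
  have hgE : ∀ (k : Fin τ) (j : Fin n), g ((colE τ n hn) (k, j)) = (l.get j).1 k := by
    intro k j
    apply hget
    · exact Fin.ext (by
        show (j.1 + k.1 * n) % n = j.1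
        rw [Nat.add_mul_mod_self_right, Nat.mod_eq_of_lt j.isLt])
    · exact Fin.ext (by
        show (j.1 + k.1 * n) / n = k.1
        rw [Nat.add_mul_div_right _ _ hn, Nat.div_eq_of_lt j.isLt, Nat.zero_add])
  have hmono : Monotone g := by
    intro i j hij
    have d1 := Nat.div_add_mod i.1 n
    have d2 := Nat.div_add_mod j.1 n
    have hk : i.1 / n ≤ j.1 / n := Nat.div_le_div_right hij
    have hiv := i.isLt
    have hjv := j.isLt
    have hjq : j.1 / n < τ := by rw [Nat.div_lt_iff_lt_mul hn]; exact j.isLt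
    by_cases hkk : i.1 / n = j.1 / n
    · -- same position block
      rw [← hkk] at d2
      have hmm : i.1 % n ≤ j.1 % n := by omega
      rcases Nat.lt_or_ge (i.1 % n) (j.1 % n) with hlt | hge
      · have hPO := List.pairwise_iff_get.mp hpw ⟨i.1 % n, Nat.mod_lt _ hn⟩
          ⟨j.1 % n, Nat.mod_lt _ hn⟩ hlt
        calc g i ≤ (l.get ⟨j.1 % n, Nat.mod_lt _ hn⟩).1 ⟨i.1 / n, _⟩ := hPO.1 _
          _ = g j := hget _ _ _ _ rfl (Fin.ext hkk)
      · exact le_of_eq (hget _ _ _ _ (Fin.ext (show i.1 % n = j.1 % n by omega))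
          (Fin.ext hkk))
    · have hklt : i.1 / n < j.1 / n := by omega
      rcases lt_trichotomy (i.1 % n) (j.1 % n) with hlt | heq | hgt
      · -- tuple index increases, use PO.1 then monotonicity
        have hPO := List.pairwise_iff_get.mp hpw ⟨i.1 % n, Nat.mod_lt _ hn⟩
          ⟨j.1 % n, Nat.mod_lt _ hn⟩ hlt
        calc g i ≤ (l.get ⟨j.1 % n, Nat.mod_lt _ hn⟩).1 ⟨i.1 / n, by omega⟩ := hPO.1 _
          _ ≤ g j := (l.get _).2.mono (by rw [Fin.le_def]; exact hk)
      · calc g i = (l.get ⟨j.1 % n, Nat.mod_lt _ hn⟩).1 ⟨i.1 / n, by omega⟩ :=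
              hget _ _ _ _ (Fin.ext heq) rfl
          _ ≤ g j := (l.get _).2.mono (by rw [Fin.le_def]; exact hk)
      · -- tuple index decreases: use PO.2
        have hPO := List.pairwise_iff_get.mp hpw ⟨j.1 % n, Nat.mod_lt _ hn⟩
          ⟨i.1 % n, Nat.mod_lt _ hn⟩ hgt
        have hstep : (l.get ⟨i.1 % n, Nat.mod_lt _ hn⟩).1 ⟨i.1 / n, by omega⟩
            ≤ (l.get ⟨j.1 % n, Nat.mod_lt _ hn⟩).1 ⟨i.1 / n + 1, by omega⟩ :=
          hPO.2 _ _ rfl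
        calc g i ≤ (l.get ⟨j.1 % n, Nat.mod_lt _ hn⟩).1 ⟨i.1 / n + 1, by omega⟩ := hstep
          _ ≤ g j := (l.get _).2.mono (by rw [Fin.le_def]; show i.1/n + 1 ≤ j.1/n; omega)
  refine ⟨g, hmono, ?_, fun k j => (hgE k j).symm⟩
  rw [ofFn_multiset g, ← Equiv.sum_comp (colE τ n hn) (fun i => ({g i} : Multiset ℕ)),
    Fintype.sum_prod_type]
  have : ∀ (k : Fin τ) (j : Fin n), ({g ((colE τ n hn) (k, j))} : Multiset ℕ)
      = {(l.get j).1 k} := fun k j => by rw [hgE]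
  rw [Finset.sum_congr rfl (fun k _ => Finset.sum_congr rfl (fun j _ => this k j))]
  rw [Finset.sum_comm]
  have hl : entriesM (l : Multiset V)
      = ∑ j : Fin n, ∑ k : Fin τ, ({(l.get j).1 k} : Multiset ℕ) := by
    rw [entriesM]
    rw [show (Multiset.map (fun v : V => ((List.ofFn v.1 : List ℕ) : Multiset ℕ)) (l : Multiset V))
        = ((l.map fun v : V => ((List.ofFn v.1 : List ℕ) : Multiset ℕ)) : Multiset (Multiset ℕ))
      from Multiset.map_coe _ _]
    rw [show (l.map fun v : V => ((List.ofFn v.1 : List ℕ) : Multiset ℕ))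
        = List.ofFn (fun j : Fin n => ((List.ofFn (l.get j).1 : List ℕ) : Multiset ℕ))
      from by
        conv_lhs => rw [← List.ofFn_get l]
        rw [List.map_ofFn]
        rfl]
    rw [Multiset.sum_coe, List.sum_ofFn]
    exact Finset.sum_congr rfl fun j _ => ofFn_multiset _
  rw [hl]

end Chains

section Unique
variable {τ d M : ℕ} {b c s r : Fin M → ℕ}
local notation "V" => {x : Fin τ → ℕ // Admissible τ d M b c s r x}

lemma sortedFam_unique (hτ0 : 0 < τ) {S S' : Multiset V}
    (h : Multiset.Pairwise Comp S) (h' : Multiset.Pairwise Comp S')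
    (hent : entriesM S = entriesM S') : S = S' := by
  obtain ⟨l0, hS0, hpw0⟩ := h
  obtain ⟨l0', hS0', hpw0'⟩ := h'
  obtain ⟨l, hperm, hpw⟩ := chain_of_pairwise l0 hpw0
  obtain ⟨l', hperm', hpw'⟩ := chain_of_pairwise l0' hpw0'
  have hS : S = (l : Multiset V) := by rw [hS0]; exact Multiset.coe_eq_coe.mpr hperm
  have hS' : S' = (l' : Multiset V) := by rw [hS0']; exact Multiset.coe_eq_coe.mpr hperm'
  have hentl : entriesM (l : Multiset V) = entriesM (l' : Multiset V) := by
    rw [← hS, ← hS', hent]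
  have hcard : τ * l.length = τ * l'.length := by
    have h1 := entriesM_card (l : Multiset V)
    have h2 := entriesM_card (l' : Multiset V)
    rw [hentl] at h1
    rw [Multiset.coe_card] at h1 h2
    omega
  have hlen : l.length = l'.length := by
    rcases Nat.eq_zero_or_pos τ with h0 | h0
    · omega
    · exact Nat.eq_of_mul_eq_mul_left h0 hcard
  rcases Nat.eq_zero_or_pos l.length with hz | hn
  · have hz' : l'.length = 0 := by omega
    rw [hS, hS', List.length_eq_zero_iff.mp hz, List.length_eq_zero_iff.mp hz']
  · have hn' : 0 < l'.length := by omega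
    obtain ⟨g, hm, hms, hgE⟩ := reading_eq l hn hpw
    obtain ⟨g', hm', hms', hgE'⟩ := reading_eq l' hn' hpw'
    have hlist : List.ofFn g = List.ofFn g' := by
      exact List.Perm.eq_of_pairwise' (r := (· ≤ ·))
        (List.pairwise_ofFn.mpr fun i j hij => hm hij.le)
        (List.pairwise_ofFn.mpr fun i j hij => hm' hij.le)
        (Multiset.coe_eq_coe.mp (by rw [hms, hms', hentl]))
    have hll : l = l' := by
      apply List.ext_get hlen
      intro j h1 h2
      apply Subtype.ext
      funext k
      have hb1 : j + k.1 * l.length < (List.ofFn g).length := by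
        rw [List.length_ofFn]
        exact ((colE τ l.length hn) (k, ⟨j, h1⟩)).isLt
      have e1 : (l.get ⟨j, h1⟩).1 k = (List.ofFn g).get ⟨j + k.1 * l.length, hb1⟩ := by
        rw [List.get_ofFn]
        exact hgE k ⟨j, h1⟩
      have hb2 : j + k.1 * l'.length < (List.ofFn g').length := by
        rw [List.length_ofFn]
        exact ((colE τ l'.length hn') (k, ⟨j, h2⟩)).isLt
      have e2 : (l'.get ⟨j, h2⟩).1 k = (List.ofFn g').get ⟨j + k.1 * l'.length, hb2⟩ := by
        rw [List.get_ofFn]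
        exact hgE' k ⟨j, h2⟩
      rw [e1, e2, List.get_of_eq hlist ⟨j + k.1 * l.length, hb1⟩]
      exact congrArg _ (Fin.ext (by simp [hlen]))
    rw [hS, hS', hll]

end Unique

section Measure

lemma bal_sq {A B p q : ℕ} (h1 : p + q = A + B)
    (hq : (A ≤ q ∧ q ≤ B) ∨ (B ≤ q ∧ q ≤ A)) : p^2 + q^2 ≤ A^2 + B^2 := by
  zify at h1 ⊢
  rcases hq with ⟨h2, h3⟩ | ⟨h2, h3⟩
  · have h2' : (A : ℤ) ≤ q := by exact_mod_cast h2
    have h3' : (q : ℤ) ≤ B := by exact_mod_cast h3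
    nlinarith [mul_nonneg (by linarith : (0:ℤ) ≤ (q:ℤ) - A) (by linarith : (0:ℤ) ≤ (B:ℤ) - q)]
  · have h2' : (B : ℤ) ≤ q := by exact_mod_cast h2
    have h3' : (q : ℤ) ≤ A := by exact_mod_cast h3
    nlinarith [mul_nonneg (by linarith : (0:ℤ) ≤ (q:ℤ) - B) (by linarith : (0:ℤ) ≤ (A:ℤ) - q)]

lemma bal_sq_lt {A B p q : ℕ} (h1 : p + q = A + B)
    (hq : (A < q ∧ q < B) ∨ (B < q ∧ q < A)) : p^2 + q^2 < A^2 + B^2 := by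
  zify at h1 ⊢
  rcases hq with ⟨h2, h3⟩ | ⟨h2, h3⟩
  · have h2' : (A : ℤ) < q := by exact_mod_cast h2
    have h3' : (q : ℤ) < B := by exact_mod_cast h3
    nlinarith [mul_pos (by linarith : (0:ℤ) < (q:ℤ) - A) (by linarith : (0:ℤ) < (B:ℤ) - q)]
  · have h2' : (B : ℤ) < q := by exact_mod_cast h2
    have h3' : (q : ℤ) < A := by exact_mod_cast h3
    nlinarith [mul_pos (by linarith : (0:ℤ) < (q:ℤ) - B) (by linarith : (0:ℤ) < (A:ℤ) - q)]

lemma spread_sq_lt {A B P Q : ℕ} (h1 : P + Q = A + B) (h2 : A < P) (h3 : B < P) :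
    A^2 + B^2 < P^2 + Q^2 := by
  zify at h1 ⊢
  have h2' : (A : ℤ) < P := by exact_mod_cast h2
  have h3' : (B : ℤ) < P := by exact_mod_cast h3
  nlinarith [mul_pos (by linarith : (0:ℤ) < (P:ℤ) - A) (by linarith : (0:ℤ) < (P:ℤ) - B)]

lemma maxmin_sq {A B p q : ℕ} (hp : p = max A B) (hq : q = min A B) :
    p^2 + q^2 = A^2 + B^2 := by
  rcases le_total A B with h | h
  · rw [hp, hq, max_eq_right h, min_eq_left h]
    exact Nat.add_comm _ _
  · rw [hp, hq, max_eq_left h, min_eq_right h]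

variable {τ d M : ℕ} {b c s r : Fin M → ℕ}

local notation "V" => {x : Fin τ → ℕ // Admissible τ d M b c s r x}

lemma cnt_full (x : V) {v : ℕ} (hv : d ≤ v) : cnt x.1 v = τ := by
  unfold cnt
  rw [Finset.filter_true_of_mem (fun k _ => le_trans (x.2.mem k).2 hv)]
  simp

def psi (x : V) : ℕ := ∑ v ∈ Finset.range d, cnt x.1 v

def phi1 (x : V) : ℕ := ∑ v ∈ Finset.range d, (cnt x.1 v)^2

def Phi1 (S : Multiset V) : ℕ := (S.map phi1).sum

def Phi2 (S : Multiset V) : ℕ := (S.map fun x => (psi x)^2).sum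

def meas (S : Multiset V) : ℕ :=
  Phi1 S * (Multiset.card S * (τ*d)^2 + 1) + (Multiset.card S * (τ*d)^2 - Phi2 S)

lemma psi_le (x : V) : psi x ≤ τ * d := by
  calc psi x ≤ ∑ _v ∈ Finset.range d, τ :=
        Finset.sum_le_sum fun v _ => cnt_le_card x.1 v
    _ = d * τ := by rw [Finset.sum_const, Finset.card_range, smul_eq_mul]
    _ = τ * d := mul_comm d τ

lemma Phi2_le (S : Multiset V) : Phi2 S ≤ Multiset.card S * (τ*d)^2 := by
  have h := Multiset.sum_le_card_nsmul (S.map fun x => (psi x)^2) ((τ*d)^2) ?_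
  · rw [Multiset.card_map, smul_eq_mul] at h
    exact h
  · intro x hx
    obtain ⟨y, _, rfl⟩ := Multiset.mem_map.mp hx
    exact Nat.pow_le_pow_left (psi_le y) 2

lemma Phi1_cons (x : V) (S : Multiset V) : Phi1 (x ::ₘ S) = phi1 x + Phi1 S := by
  rw [Phi1, Multiset.map_cons, Multiset.sum_cons, Phi1]

lemma Phi2_cons (x : V) (S : Multiset V) : Phi2 (x ::ₘ S) = (psi x)^2 + Phi2 S := by
  rw [Phi2, Multiset.map_cons, Multiset.sum_cons, Phi2]

lemma meas_lt {a a' o e : V} (S0 : Multiset V)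
    (hcnt : ∀ v, cnt o.1 v = (cnt a.1 v + cnt a'.1 v + 1)/2
      ∧ cnt e.1 v = (cnt a.1 v + cnt a'.1 v)/2)
    (hpoe : PairOrdered o.1 e.1)
    (hnons : Nonsorted a.1 a'.1) :
    meas (o ::ₘ e ::ₘ S0) < meas (a ::ₘ a' ::ₘ S0) := by
  classical
  have hcards : Multiset.card (o ::ₘ e ::ₘ S0) = Multiset.card (a ::ₘ a' ::ₘ S0) := by
    simp
  set Bb : ℕ := Multiset.card (a ::ₘ a' ::ₘ S0) * (τ*d)^2 with hBb
  have hb2 : Phi2 (o ::ₘ e ::ₘ S0) ≤ Bb := by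
    rw [hBb, ← hcards]; exact Phi2_le _
  have hb2' : Phi2 (a ::ₘ a' ::ₘ S0) ≤ Bb := Phi2_le _
  have hle : ∀ v, (cnt o.1 v)^2 + (cnt e.1 v)^2 ≤ (cnt a.1 v)^2 + (cnt a'.1 v)^2 := by
    intro v
    have h := hcnt v
    refine bal_sq ?_ ?_ <;> omega
  by_cases hD : ∃ v, v < d ∧ (cnt a.1 v + 2 ≤ cnt a'.1 v ∨ cnt a'.1 v + 2 ≤ cnt a.1 v)
  · -- Phi1 strictly decreases
    obtain ⟨v1, hv1, hd1⟩ := hD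
    have hphi : phi1 o + phi1 e < phi1 a + phi1 a' := by
      have hsum : ∀ x y : V, phi1 x + phi1 y
          = ∑ v ∈ Finset.range d, ((cnt x.1 v)^2 + (cnt y.1 v)^2) := by
        intro x y
        rw [phi1, phi1, ← Finset.sum_add_distrib]
      rw [hsum, hsum]
      apply Finset.sum_lt_sum (fun v _ => hle v)
      refine ⟨v1, Finset.mem_range.mpr hv1, ?_⟩
      have h := hcnt v1
      refine bal_sq_lt ?_ ?_ <;> omega
    have h1 : Phi1 (o ::ₘ e ::ₘ S0) < Phi1 (a ::ₘ a' ::ₘ S0) := by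
      rw [Phi1_cons, Phi1_cons, Phi1_cons, Phi1_cons]
      omega
    rw [meas, meas, ← hBb, hcards, ← hBb]
    have hkey : (Phi1 (o ::ₘ e ::ₘ S0) + 1) * (Bb + 1) ≤ Phi1 (a ::ₘ a' ::ₘ S0) * (Bb + 1) :=
      Nat.mul_le_mul_right _ (by omega)
    have hexp : (Phi1 (o ::ₘ e ::ₘ S0) + 1) * (Bb + 1)
        = Phi1 (o ::ₘ e ::ₘ S0) * (Bb + 1) + (Bb + 1) := by ring
    omega
  · -- balanced case : Phi1 equal, Phi2 strictly increases
    push_neg at hD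
    have hsmall : ∀ v, cnt a.1 v ≤ cnt a'.1 v + 1 ∧ cnt a'.1 v ≤ cnt a.1 v + 1 := by
      intro v
      rcases Nat.lt_or_ge v d with hv | hv
      · have := hD v hv
        omega
      · rw [cnt_full a hv, cnt_full a' hv]
        omega
    -- witnesses in both directions
    have hw1 : ∃ v, v < d ∧ cnt a.1 v < cnt a'.1 v := by
      by_contra hno
      push_neg at hno
      have hall : ∀ v, cnt a'.1 v ≤ cnt a.1 v := by
        intro v
        rcases Nat.lt_or_ge v d with hv | hv
        · exact hno v hv
        · rw [cnt_full a hv, cnt_full a' hv]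
      have ho : o.1 = a.1 := cnt_inj o.2.mono a.2.mono (by
        intro v
        have h := hcnt v
        have h2 := hsmall v
        have h3 := hall v
        omega)
      have he : e.1 = a'.1 := cnt_inj e.2.mono a'.2.mono (by
        intro v
        have h := hcnt v
        have h2 := hsmall v
        have h3 := hall v
        omega)
      rw [ho, he] at hpoe
      exact hnons (Or.inl hpoe)
    have hw2 : ∃ v, v < d ∧ cnt a'.1 v < cnt a.1 v := by
      by_contra hno
      push_neg at hno
      have hall : ∀ v, cnt a.1 v ≤ cnt a'.1 v := by
        intro v
        rcases Nat.lt_or_ge v d with hv | hv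
        · exact hno v hv
        · rw [cnt_full a hv, cnt_full a' hv]
      have ho : o.1 = a'.1 := cnt_inj o.2.mono a'.2.mono (by
        intro v
        have h := hcnt v
        have h2 := hsmall v
        have h3 := hall v
        omega)
      have he : e.1 = a.1 := cnt_inj e.2.mono a.2.mono (by
        intro v
        have h := hcnt v
        have h2 := hsmall v
        have h3 := hall v
        omega)
      rw [ho, he] at hpoe
      exact hnons (Or.inr hpoe)
    obtain ⟨v1, hv1, hlt1⟩ := hw1
    obtain ⟨v2, hv2, hlt2⟩ := hw2
    have hphi1eq : phi1 o + phi1 e = phi1 a + phi1 a' := by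
      have hsum : ∀ x y : V, phi1 x + phi1 y
          = ∑ v ∈ Finset.range d, ((cnt x.1 v)^2 + (cnt y.1 v)^2) := by
        intro x y
        rw [phi1, phi1, ← Finset.sum_add_distrib]
      rw [hsum, hsum]
      apply Finset.sum_congr rfl
      intro v _
      have h := hcnt v
      have h2 := hsmall v
      exact maxmin_sq (by omega) (by omega)
    have hP1 : Phi1 (o ::ₘ e ::ₘ S0) = Phi1 (a ::ₘ a' ::ₘ S0) := by
      rw [Phi1_cons, Phi1_cons, Phi1_cons, Phi1_cons]
      omega
    have hpsio : psi a < psi o ∧ psi a' < psi o := by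
      constructor
      · apply Finset.sum_lt_sum (fun v _ => by have := hcnt v; have := hsmall v; omega)
        exact ⟨v1, Finset.mem_range.mpr hv1, by have := hcnt v1; have := hsmall v1; omega⟩
      · apply Finset.sum_lt_sum (fun v _ => by have := hcnt v; have := hsmall v; omega)
        exact ⟨v2, Finset.mem_range.mpr hv2, by have := hcnt v2; have := hsmall v2; omega⟩
    have hpsisum : psi o + psi e = psi a + psi a' := by
      rw [psi, psi, psi, psi, ← Finset.sum_add_distrib, ← Finset.sum_add_distrib]
      apply Finset.sum_congr rfl
      intro v _
      have := hcnt v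
      omega
    have hP2 : Phi2 (a ::ₘ a' ::ₘ S0) < Phi2 (o ::ₘ e ::ₘ S0) := by
      rw [Phi2_cons, Phi2_cons, Phi2_cons, Phi2_cons]
      have := spread_sq_lt hpsisum hpsio.1 hpsio.2
      omega
    rw [meas, meas, ← hBb, hcards, ← hBb, hP1]
    omega

end Measure

section NF

lemma pair_le_of_get {α : Type*} (l : List α) (i j : Fin l.length) (hij : i.1 < j.1) :
    l.get i ::ₘ l.get j ::ₘ 0 ≤ (l : Multiset α) := by
  induction l with
  | nil => exact absurd j.isLt (by simp)
  | cons x xs ih =>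
    rcases i with ⟨iv, hi⟩
    rcases j with ⟨jv, hj⟩
    match iv, jv with
    | 0, jv + 1 =>
      show x ::ₘ xs.get ⟨jv, by simpa using hj⟩ ::ₘ 0 ≤ (x ::ₘ (xs : Multiset α))
      refine Multiset.cons_le_cons x ?_
      have : xs.get ⟨jv, by simpa using hj⟩ ::ₘ 0 = ({xs.get ⟨jv, by simpa using hj⟩} : Multiset α) := rfl
      rw [this, Multiset.singleton_le]
      exact Multiset.mem_coe.mpr (List.get_mem _ _)
    | iv + 1, jv + 1 =>
      have h := ih ⟨iv, by simpa using hi⟩ ⟨jv, by simpa using hj⟩ (by simpa using hij)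
      show (x :: xs).get ⟨iv+1, hi⟩ ::ₘ (x :: xs).get ⟨jv+1, hj⟩ ::ₘ 0 ≤ (x ::ₘ (xs : Multiset α))
      exact le_trans h (Multiset.le_cons_self _ _)

variable {τ d M : ℕ} {b c s r : Fin M → ℕ}

local notation "V" => {x : Fin τ → ℕ // Admissible τ d M b c s r x}

noncomputable def YS (K : Type*) [Field K] (S : Multiset V) : MvPolynomial V K :=
  (S.map MvPolynomial.X).prod

def Gset (τ d M : ℕ) (b c s r : Fin M → ℕ) (K : Type*) [Field K] :
    Set (MvPolynomial {x : Fin τ → ℕ // Admissible τ d M b c s r x} K) :=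
  { g | ∃ α β γodd γeven : {x : Fin τ → ℕ // Admissible τ d M b c s r x},
      Nonsorted α.1 β.1 ∧ IsSplit α.1 β.1 γodd.1 γeven.1 ∧
      g = MvPolynomial.X α * MvPolynomial.X β - MvPolynomial.X γodd * MvPolynomial.X γeven }

lemma YS_cons (K : Type*) [Field K] (x : V) (S : Multiset V) :
    YS K (x ::ₘ S) = MvPolynomial.X x * YS K S := by
  rw [YS, Multiset.map_cons, Multiset.prod_cons, YS]

lemma nf_exists (hs : ∀ i, 1 ≤ s i) (hsr : ∀ i, s i ≤ r i)
    (K : Type*) [Field K] (S : Multiset V) :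
    ∃ T : Multiset V, Multiset.Pairwise Comp T ∧ entriesM T = entriesM S ∧
      YS K S - YS K T ∈ Ideal.span (Gset τ d M b c s r K) := by
  classical
  have H : ∀ (N : ℕ) (S : Multiset V), meas S < N →
      ∃ T : Multiset V, Multiset.Pairwise Comp T ∧ entriesM T = entriesM S ∧
        YS K S - YS K T ∈ Ideal.span (Gset τ d M b c s r K) := by
    intro N
    induction N with
    | zero => intro S hm; omega
    | succ N ih =>
      intro S hm
      by_cases hS : Multiset.Pairwise Comp S
      · exact ⟨S, hS, rfl, by rw [sub_self]; exact Submodule.zero_mem _⟩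
      · -- find a nonsorted pair
        set l := S.toList with hl
        have hSl : S = (l : Multiset V) := (Multiset.coe_toList S).symm
        have hnp : ¬ l.Pairwise Comp := fun hp => hS ⟨l, hSl, hp⟩
        rw [List.pairwise_iff_get] at hnp
        push_neg at hnp
        obtain ⟨i, j, hij, hnc⟩ := hnp
        set a : V := l.get i with ha
        set a' : V := l.get j with ha'
        have hnons : Nonsorted a.1 a'.1 := fun hor => hnc (by
          rcases hor with h | h
          · exact Or.inl h
          · exact Or.inr h)
        have hpair : a ::ₘ a' ::ₘ 0 ≤ S := by
          rw [hSl]; exact pair_le_of_get l i j hij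
        obtain ⟨S0, hS0⟩ := Multiset.le_iff_exists_add.mp hpair
        have hS2 : S = a ::ₘ a' ::ₘ S0 := by
          rw [hS0]
          simp [Multiset.cons_add]
        obtain ⟨ofn, efn, hAo, hAe, hsplit, hcnt⟩ := split_exists hs hsr a.2 a'.2
        set oV : V := ⟨ofn, hAo⟩ with hoV
        set eV : V := ⟨efn, hAe⟩ with heV
        have hpoe : PairOrdered oV.1 eV.1 := isSplit_pairOrdered hsplit
        set S' : Multiset V := oV ::ₘ eV ::ₘ S0 with hS'
        have hent' : entriesM S' = entriesM S := by
          rw [hS', hS2, entriesM_cons, entriesM_cons, entriesM_cons, entriesM_cons,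
            ← add_assoc, ← add_assoc, isSplit_entries hsplit]
        have hmeas : meas S' < meas S := by
          rw [hS', hS2]
          exact meas_lt S0 hcnt hpoe hnons
        have hbin : MvPolynomial.X a * MvPolynomial.X a'
            - MvPolynomial.X oV * MvPolynomial.X eV ∈ Gset τ d M b c s r K :=
          ⟨a, a', oV, eV, hnons, hsplit, rfl⟩
        have hYS : YS K S - YS K S'
            = (MvPolynomial.X a * MvPolynomial.X a'
              - MvPolynomial.X oV * MvPolynomial.X eV) * YS K S0 := by
          rw [hS', hS2, YS_cons, YS_cons, YS_cons, YS_cons]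
          ring
        have hstep : YS K S - YS K S' ∈ Ideal.span (Gset τ d M b c s r K) := by
          rw [hYS]
          exact Ideal.mul_mem_right _ _ (Ideal.subset_span hbin)
        obtain ⟨T, hT1, hT2, hT3⟩ := ih S' (by omega)
        refine ⟨T, hT1, by rw [hT2, hent'], ?_⟩
        have : YS K S - YS K T = (YS K S - YS K S') + (YS K S' - YS K T) := by ring
        rw [this]
        exact Ideal.add_mem _ hstep hT3
  exact H (meas S + 1) S (by omega)

end NF

section Pi

open MvPolynomial

variable {τ d M : ℕ} {b c s r : Fin M → ℕ}

local notation "V" => {x : Fin τ → ℕ // Admissible τ d M b c s r x}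

def emb (hd : 1 ≤ d) : ℕ → Fin d := fun x => ⟨(x-1) % d, Nat.mod_lt _ (by omega)⟩

noncomputable def fM (hd : 1 ≤ d) (K : Type*) [Field K] (m : Multiset ℕ) :
    MvPolynomial (Fin d) K :=
  (m.map (fun x => X (emb hd x))).prod

lemma fM_add (hd : 1 ≤ d) (K : Type*) [Field K] (m m' : Multiset ℕ) :
    fM hd K (m + m') = fM hd K m * fM hd K m' := by
  rw [fM, fM, fM, Multiset.map_add, Multiset.prod_add]

lemma pi_X (hd : 1 ≤ d) (K : Type*) [Field K] (v : V) :
    piSV τ d M b c s r K (X v) = fM hd K ((List.ofFn v.1 : List ℕ) : Multiset ℕ) := by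
  rw [piSV, aeval_X]
  rw [fM, show Multiset.map (fun x => (X (emb hd x) : MvPolynomial (Fin d) K))
      ((List.ofFn v.1 : List ℕ) : Multiset ℕ)
    = (((List.ofFn v.1).map fun x => (X (emb hd x) : MvPolynomial (Fin d) K))
        : Multiset (MvPolynomial (Fin d) K)) from Multiset.map_coe _ _]
  rw [Multiset.prod_coe, List.map_ofFn, List.prod_ofFn]
  apply Finset.prod_congr rfl
  intro k _
  show (X ⟨v.1 k - 1, _⟩ : MvPolynomial (Fin d) K) = X (emb hd (v.1 k))
  congr 1
  apply Fin.ext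
  show v.1 k - 1 = (v.1 k - 1) % d
  have := v.2.mem k
  rw [Nat.mod_eq_of_lt (by omega)]

lemma pi_YS (hd : 1 ≤ d) (K : Type*) [Field K] (S : Multiset V) :
    piSV τ d M b c s r K (YS K S) = fM hd K (entriesM S) := by
  induction S using Multiset.induction with
  | empty =>
    show piSV τ d M b c s r K (YS K 0) = fM hd K (entriesM 0)
    rw [YS, entriesM]
    simp [fM]
  | cons a S ih =>
    rw [YS_cons, map_mul, entriesM_cons, fM_add, pi_X hd, ih]

lemma span_le_ker (hd : 1 ≤ d) (K : Type*) [Field K] :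
    Ideal.span (Gset τ d M b c s r K) ≤ RingHom.ker (piSV τ d M b c s r K) := by
  rw [Ideal.span_le]
  rintro g ⟨α, β, γo, γe, hns, hsp, rfl⟩
  show _ ∈ RingHom.ker (piSV τ d M b c s r K)
  rw [RingHom.mem_ker, map_sub, map_mul, map_mul, pi_X hd, pi_X hd, pi_X hd, pi_X hd,
    ← fM_add, ← fM_add, isSplit_entries hsp, sub_self]

end Pi

section KerLe

open MvPolynomial

variable {τ d M : ℕ} {b c s r : Fin M → ℕ}

local notation "V" => {x : Fin τ → ℕ // Admissible τ d M b c s r x}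

lemma YS_monomial (K : Type*) [Field K] (T : Multiset V) :
    YS K T = monomial (Multiset.toFinsupp T) 1 := by
  classical
  induction T using Multiset.induction with
  | empty =>
    show YS K 0 = _
    rw [YS]
    simp [monomial_zero']
  | cons a T ih =>
    rw [YS_cons, ih, show (a ::ₘ T) = {a} + T from (Multiset.singleton_add a T).symm,
      Multiset.toFinsupp_add, Multiset.toFinsupp_singleton,
      X, monomial_mul, one_mul]

noncomputable def embM (hd : 1 ≤ d) (m : Multiset ℕ) : Fin d →₀ ℕ :=
  (m.map fun x => Finsupp.single (emb hd x) 1).sum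

lemma fM_monomial (hd : 1 ≤ d) (K : Type*) [Field K] (m : Multiset ℕ) :
    fM hd K m = monomial (embM hd m) 1 := by
  induction m using Multiset.induction with
  | empty =>
    rw [fM, embM]
    simp [monomial_zero']
  | cons x m ih =>
    rw [fM, Multiset.map_cons, Multiset.prod_cons]
    rw [fM] at ih
    rw [ih]
    simp only [embM, Multiset.map_cons, Multiset.sum_cons]
    rw [X, monomial_mul, one_mul]

lemma toMultiset_embM (hd : 1 ≤ d) (m : Multiset ℕ) :
    Finsupp.toMultiset (embM hd m) = m.map (emb hd) := by
  rw [embM, map_multiset_sum, Multiset.map_map]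
  have h : ∀ x : ℕ, Finsupp.toMultiset (Finsupp.single (emb hd x) 1) = {emb hd x} := by
    intro x
    rw [Finsupp.toMultiset_single, one_smul]
  induction m using Multiset.induction with
  | empty => simp
  | cons y m ih =>
    rw [Multiset.map_cons, Multiset.map_cons, Multiset.sum_cons, ih]
    rw [Function.comp_apply, h, Multiset.singleton_add]

lemma embM_inj (hd : 1 ≤ d) {m m' : Multiset ℕ}
    (hm : ∀ x ∈ m, 1 ≤ x ∧ x ≤ d) (hm' : ∀ x ∈ m', 1 ≤ x ∧ x ≤ d)
    (h : embM hd m = embM hd m') : m = m' := by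
  have key : ∀ mm : Multiset ℕ, (∀ x ∈ mm, 1 ≤ x ∧ x ≤ d) →
      (mm.map (emb hd)).map (fun j : Fin d => j.1 + 1) = mm := by
    intro mm hmm
    rw [Multiset.map_map]
    have : ∀ x ∈ mm, ((fun j : Fin d => j.1 + 1) ∘ emb hd) x = id x := by
      intro x hx
      have hb := hmm x hx
      show (x - 1) % d + 1 = x
      rw [Nat.mod_eq_of_lt (by omega)]
      omega
    rw [Multiset.map_congr rfl this, Multiset.map_id]
  have h2 : m.map (emb hd) = m'.map (emb hd) := by
    rw [← toMultiset_embM hd m, ← toMultiset_embM hd m', h]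
  rw [← key m hm, ← key m' hm', h2]

lemma entriesM_valid (S : Multiset V) : ∀ x ∈ entriesM S, 1 ≤ x ∧ x ≤ d := by
  induction S using Multiset.induction with
  | empty => intro x hx; simp [entriesM] at hx
  | cons a S ih =>
    intro x hx
    rw [entriesM_cons, Multiset.mem_add] at hx
    rcases hx with hx | hx
    · rw [Multiset.mem_coe] at hx
      obtain ⟨k, hk⟩ := List.mem_ofFn.mp hx
      rw [← hk]
      exact a.2.mem k
    · exact ih x hx

lemma pi_monomial' (hd : 1 ≤ d) (K : Type*) [Field K] (T : Multiset V) (co : K) :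
    piSV τ d M b c s r K (monomial (Multiset.toFinsupp T) co)
      = monomial (embM hd (entriesM T)) co := by
  have h1 : (monomial (Multiset.toFinsupp T) co : MvPolynomial V K)
      = C co * monomial (Multiset.toFinsupp T) 1 := by
    rw [C_mul_monomial, mul_one]
  rw [h1, map_mul, ← YS_monomial, pi_YS hd, fM_monomial hd]
  have h2 : piSV τ d M b c s r K (C co) = C co := by
    rw [piSV]
    simp
  rw [h2, C_mul_monomial, mul_one]

lemma ker_le_span (hτ : 2 ≤ τ) (hd : 1 ≤ d)
    (hs : ∀ i, 1 ≤ s i) (hsr : ∀ i, s i ≤ r i) (K : Type*) [Field K] :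
    RingHom.ker (piSV τ d M b c s r K) ≤ Ideal.span (Gset τ d M b c s r K) := by
  classical
  intro p hp
  choose T hT1 hT2 hT3 using fun m : (V →₀ ℕ) =>
    nf_exists hs hsr K (Finsupp.toMultiset m)
  set q : MvPolynomial V K :=
    ∑ m ∈ p.support, monomial (Multiset.toFinsupp (T m)) (coeff m p) with hq
  have hpq : p - q ∈ Ideal.span (Gset τ d M b c s r K) := by
    have hrep : p - q = ∑ m ∈ p.support,
        (monomial m (coeff m p) - monomial (Multiset.toFinsupp (T m)) (coeff m p)) := by
      rw [Finset.sum_sub_distrib, ← hq, support_sum_monomial_coeff p]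
    rw [hrep]
    apply Ideal.sum_mem
    intro m _
    have h1 : (monomial m (coeff m p) : MvPolynomial V K)
          - monomial (Multiset.toFinsupp (T m)) (coeff m p)
        = C (coeff m p) * (YS K (Finsupp.toMultiset m) - YS K (T m)) := by
      rw [YS_monomial, YS_monomial, Finsupp.toMultiset_toFinsupp, mul_sub,
        C_mul_monomial, C_mul_monomial, mul_one]
    rw [h1]
    exact Ideal.mul_mem_left _ _ (hT3 m)
  have hpiq : piSV τ d M b c s r K q = 0 := by
    have h1 : piSV τ d M b c s r K (p - q) = 0 :=
      span_le_ker hd K hpq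
    have h2 : piSV τ d M b c s r K p = 0 := hp
    rw [map_sub, h2] at h1
    have := h1
    rw [zero_sub, neg_eq_zero] at this
    exact this
  have hq0 : q = 0 := by
    apply MvPolynomial.ext
    intro ν
    rw [coeff_zero, hq, coeff_sum]
    by_cases hex : ∃ m0 ∈ p.support, Multiset.toFinsupp (T m0) = ν
    · obtain ⟨m0, hm0s, hm0⟩ := hex
      have hw : coeff (embM hd (entriesM (T m0))) (piSV τ d M b c s r K q) = 0 := by
        rw [hpiq, coeff_zero]
      rw [hq, map_sum, coeff_sum] at hw
      have hwsum : ∀ m ∈ p.support,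
          coeff (embM hd (entriesM (T m0)))
            (piSV τ d M b c s r K (monomial (Multiset.toFinsupp (T m)) (coeff m p)))
          = if embM hd (entriesM (T m)) = embM hd (entriesM (T m0))
              then coeff m p else 0 := by
        intro m _
        rw [pi_monomial' hd, coeff_monomial]
      rw [Finset.sum_congr rfl hwsum] at hw
      have hiff : ∀ m ∈ p.support,
          (Multiset.toFinsupp (T m) = ν)
            ↔ (embM hd (entriesM (T m)) = embM hd (entriesM (T m0))) := by
        intro m _
        constructor
        · intro h
          have hTT : T m = T m0 := by
            have h1 : Finsupp.toMultiset (Multiset.toFinsupp (T m))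
                = Finsupp.toMultiset (Multiset.toFinsupp (T m0)) := by rw [h, hm0]
            rwa [Multiset.toFinsupp_toMultiset, Multiset.toFinsupp_toMultiset] at h1
          rw [hTT]
        · intro h
          have hent : entriesM (T m) = entriesM (T m0) :=
            embM_inj hd (entriesM_valid (T m)) (entriesM_valid (T m0)) h
          have hTT : T m = T m0 :=
            sortedFam_unique (by omega) (hT1 m) (hT1 m0) hent
          rw [hTT, hm0]
      have hcongr : ∀ m ∈ p.support,
          (coeff ν (monomial (Multiset.toFinsupp (T m)) (coeff m p)))
          = if embM hd (entriesM (T m)) = embM hd (entriesM (T m0))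
              then coeff m p else 0 := by
        intro m hm
        rw [coeff_monomial, if_congr (hiff m hm) rfl rfl]
      rw [Finset.sum_congr rfl hcongr]
      exact hw
    · push_neg at hex
      apply Finset.sum_eq_zero
      intro m hm
      rw [coeff_monomial, if_neg (hex m hm)]
  rw [hq0, sub_zero] at hpq
  exact hpq

end KerLe

section Minimal

open MvPolynomial

variable {τ d M : ℕ} {b c s r : Fin M → ℕ}

local notation "V" => {x : Fin τ → ℕ // Admissible τ d M b c s r x}

lemma XX_monomial (K : Type*) [Field K] (x y : V) :
    (X x * X y : MvPolynomial V K)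
      = monomial (Finsupp.single x 1 + Finsupp.single y 1) 1 := by
  rw [X, X, monomial_mul, one_mul]

lemma toMultiset_pair (x y : V) :
    Finsupp.toMultiset (Finsupp.single x 1 + Finsupp.single y 1) = (x ::ₘ {y}) := by
  rw [map_add, Finsupp.toMultiset_single, Finsupp.toMultiset_single, one_smul, one_smul,
    Multiset.singleton_add]

lemma pair_cases {x y x' y' : V}
    (h : (Finsupp.single x 1 + Finsupp.single y 1 : V →₀ ℕ)
      = Finsupp.single x' 1 + Finsupp.single y' 1) :
    (x = x' ∧ y = y') ∨ (x = y' ∧ y = x') := by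
  have h2 : (x ::ₘ {y} : Multiset V) = x' ::ₘ {y'} := by
    rw [← toMultiset_pair, ← toMultiset_pair, h]
  rcases Multiset.cons_eq_cons.mp h2 with ⟨h3, h4⟩ | ⟨_, cs, h5, h6⟩
  · exact Or.inl ⟨h3, Multiset.singleton_inj.mp h4⟩
  · have hcs : cs = 0 := by
      have hcard := congrArg Multiset.card h5
      rw [Multiset.card_singleton, Multiset.card_cons] at hcard
      rw [← Multiset.card_eq_zero]
      omega
    subst hcs
    have hyx : y = x' := Multiset.singleton_inj.mp h5
    have hyx' : y' = x := Multiset.singleton_inj.mp h6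
    exact Or.inr ⟨hyx'.symm, hyx⟩

lemma pair_deg2_eq {x y : V} {m0 ν : V →₀ ℕ} (hle : ν ≤ m0)
    (hν : ν = Finsupp.single x 1 + Finsupp.single y 1)
    (hm0card : (Finsupp.toMultiset m0).card = 2) : ν = m0 := by
  obtain ⟨k, hk⟩ := le_iff_exists_add.mp hle
  have h1 : Finsupp.toMultiset m0 = Finsupp.toMultiset ν + Finsupp.toMultiset k := by
    rw [hk, map_add]
  have hcν : (Finsupp.toMultiset ν).card = 2 := by
    rw [hν, toMultiset_pair]
    simp
  have hck : (Finsupp.toMultiset k).card = 0 := by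
    have := congrArg Multiset.card h1
    rw [Multiset.card_add] at this
    omega
  have hk0 : k = 0 := by
    have h2 : Finsupp.toMultiset k = 0 := Multiset.card_eq_zero.mp hck
    have h3 := congrArg Multiset.toFinsupp h2
    rwa [Finsupp.toMultiset_toFinsupp, Multiset.toFinsupp_zero] at h3
  rw [hk, hk0, add_zero]

lemma ofFn_pair_swap {x y x' y' : V} (hx : x = y') (hy : y = x') :
    ((List.ofFn x.1 : List ℕ) : Multiset ℕ) + ((List.ofFn y.1 : List ℕ) : Multiset ℕ)
      = ((List.ofFn x'.1 : List ℕ) : Multiset ℕ) + ((List.ofFn y'.1 : List ℕ) : Multiset ℕ) := by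
  rw [hx, hy, add_comm]

lemma minimal_gen (K : Type*) [Field K] :
    ∀ g ∈ Gset τ d M b c s r K, g ∉ Ideal.span (Gset τ d M b c s r K \ {g}) := by
  classical
  rintro g ⟨α, β, o, e, hns, hsp, rfl⟩ hmem
  set m0 : V →₀ ℕ := Finsupp.single α 1 + Finsupp.single β 1 with hm0
  have hm0card : (Finsupp.toMultiset m0).card = 2 := by
    rw [hm0, toMultiset_pair]
    simp
  -- the sorted monomial of g is never m0
  have hsorted_ne : ∀ (o' e' : V), PairOrdered o'.1 e'.1 →
      (Finsupp.single o' 1 + Finsupp.single e' 1 : V →₀ ℕ) ≠ m0 := by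
    intro o' e' hpo hEq
    rcases pair_cases (hm0 ▸ hEq) with ⟨h1, h2⟩ | ⟨h1, h2⟩
    · rw [h1, h2] at hpo
      exact hns (Or.inl hpo)
    · rw [h1, h2] at hpo
      exact hns (Or.inr hpo)
  have hC : ∀ (x : MvPolynomial V K),
      x ∈ Ideal.span (Gset τ d M b c s r K \ {X α * X β - X o * X e}) →
      ∀ ν, ν ≤ m0 → coeff ν x = 0 := by
    intro x hx
    refine Submodule.span_induction ?_ ?_ ?_ ?_ hx
    · rintro g' ⟨⟨α', β', o', e', hns', hsp', rfl⟩, hneq⟩ ν hν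
      rw [XX_monomial, XX_monomial, coeff_sub, coeff_monomial, coeff_monomial]
      by_cases h1 : (Finsupp.single α' 1 + Finsupp.single β' 1 : V →₀ ℕ) = ν
      · exfalso
        have hEq : (Finsupp.single α' 1 + Finsupp.single β' 1 : V →₀ ℕ) = m0 :=
          pair_deg2_eq (h1 ▸ hν) rfl hm0card
        apply hneq
        simp only [Set.mem_singleton_iff]
        rcases pair_cases (hm0 ▸ hEq) with ⟨ha, hb⟩ | ⟨ha, hb⟩
        · have hab : ((List.ofFn α'.1 : List ℕ) : Multiset ℕ) + ((List.ofFn β'.1 : List ℕ) : Multiset ℕ)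
              = ((List.ofFn α.1 : List ℕ) : Multiset ℕ) + ((List.ofFn β.1 : List ℕ) : Multiset ℕ) := by
            rw [ha, hb]
          obtain ⟨ho, he⟩ := isSplit_unique hsp' hsp hab
          rw [ha, hb, Subtype.ext ho, Subtype.ext he]
        · have hab := ofFn_pair_swap ha hb
          obtain ⟨ho, he⟩ := isSplit_unique hsp' hsp hab
          rw [ha, hb, Subtype.ext ho, Subtype.ext he, mul_comm (X β) (X α)]
      · rw [if_neg h1]
        by_cases h2 : (Finsupp.single o' 1 + Finsupp.single e' 1 : V →₀ ℕ) = ν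
        · exfalso
          have hEq : (Finsupp.single o' 1 + Finsupp.single e' 1 : V →₀ ℕ) = m0 :=
            pair_deg2_eq (h2 ▸ hν) rfl hm0card
          exact hsorted_ne o' e' (isSplit_pairOrdered hsp') hEq
        · rw [if_neg h2, sub_zero]
    · intro ν _
      rw [coeff_zero]
    · intro x y _ _ hx hy ν hν
      rw [coeff_add, hx ν hν, hy ν hν, add_zero]
    · intro a x _ hx ν hν
      rw [smul_eq_mul, coeff_mul]
      apply Finset.sum_eq_zero
      intro pq hpq
      have hle : pq.2 ≤ ν := by
        rw [Finset.HasAntidiagonal.mem_antidiagonal] at hpq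
        exact le_iff_exists_add.mpr ⟨pq.1, by rw [← hpq, add_comm]⟩
      rw [hx pq.2 (le_trans hle hν), mul_zero]
  have hcontra := hC _ hmem m0 le_rfl
  rw [XX_monomial, XX_monomial, coeff_sub, coeff_monomial, coeff_monomial,
    if_pos (hm0 ▸ rfl : (Finsupp.single α 1 + Finsupp.single β 1 : V →₀ ℕ) = m0),
    if_neg (hsorted_ne o e (isSplit_pairOrdered hsp)), sub_zero] at hcontra
  exact one_ne_zero hcontra

end Minimal

end SVaux

/-- the set G of quadratic binomials y_α y_β − y_{γ_odd} y_{γ_even},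
taken over all nonsorted pairs {α, β} of admissible tuples, is a minimal
generating set of ker π: no g ∈ G belongs to the ideal generated by G \ {g}. -/
theorem stmt_8 (hτ : 2 ≤ τ) (hd : 1 ≤ d) (hM : 1 ≤ M)
    (hcb : ∀ i, c i ≤ b i) (hs : ∀ i, 1 ≤ s i) (hsr : ∀ i, s i ≤ r i)
    (hrd : ∀ i, r i ≤ d)
    (K : Type*) [Field K]
    (G : Set (MvPolynomial {x : Fin τ → ℕ // Admissible τ d M b c s r x} K))
    (hG : G = { g | ∃ α β γodd γeven : {x : Fin τ → ℕ // Admissible τ d M b c s r x},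
      Nonsorted α.1 β.1 ∧ IsSplit α.1 β.1 γodd.1 γeven.1 ∧
      g = X α * X β - X γodd * X γeven }) :
    RingHom.ker (piSV τ d M b c s r K) = Ideal.span G ∧
    ∀ g ∈ G, g ∉ Ideal.span (G \ {g}) := by
  rw [hG]
  constructor
  · exact le_antisymm (SVaux.ker_le_span hτ hd hs hsr K) (SVaux.span_le_ker hd K)
  · exact SVaux.minimal_gen K
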